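/- Let a < b be real numbers, N > 0, and let g : ℝ → ℝ be twice differentiable on [a, b] with g(a) = g(b) = 0, g(x) > 0 for all x ∈ (a, b), and |g''(x)| ≤ N for all x ∈ [a, b]. Then the Lebesgue integral ∫_{a}^{b} g(x)^{−1/2} dx is at least 1/√N. -/

import Mathlib

open MeasureTheory Set

/-- Bounded curvature step: the crossing time of a band, between two consecutive zeros of
`g` with `|g''| ≤ N`, is bounded below by `1/√N`. -/
theorem lintegral_inv_sqrt_ge_of_bounded_second_deriv
    (a b N : ℝ) (hab : a < b) (hN : 0 < N) (g g' g'' : ℝ → ℝ)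
    (hg' : ∀ x ∈ Icc a b, HasDerivWithinAt g (g' x) (Icc a b) x)
    (hg'' : ∀ x ∈ Icc a b, HasDerivWithinAt g' (g'' x) (Icc a b) x)
    (ha : g a = 0) (hb : g b = 0)
    (hpos : ∀ x ∈ Ioo a b, 0 < g x)
    (hbound : ∀ x ∈ Icc a b, |g'' x| ≤ N) :
    ENNReal.ofReal (1 / Real.sqrt N) ≤
      ∫⁻ x in Icc a b, ENNReal.ofReal (1 / Real.sqrt (g x)) := by
  -- Define the comparison function h(x) = N/2 (x-a)(b-x) - g(x); it is concave and vanishes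
  -- at the endpoints, hence nonneg on [a,b], giving g(x) ≤ N/2 (x-a)(b-x) ≤ N(b-a)²/8.
  set h : ℝ → ℝ := fun x => N / 2 * ((x - a) * (b - x)) - g x with hh
  have hint : interior (Icc a b) = Ioo a b := interior_Icc
  have hp' : ∀ x : ℝ, HasDerivAt (fun x => N / 2 * ((x - a) * (b - x)))
      (N / 2 * ((b - x) - (x - a))) x := by
    intro x
    have h1 : HasDerivAt (fun x : ℝ => (x - a) * (b - x)) ((b - x) - (x - a)) x := by
      have := (((hasDerivAt_id x).sub_const a).mul ((hasDerivAt_const x b).sub (hasDerivAt_id x)))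
      exact this.congr_deriv (by simp only [Pi.sub_apply, id]; ring)
    simpa using h1.const_mul (N / 2)
  have hcont : ContinuousOn g (Icc a b) := fun x hx => (hg' x hx).continuousWithinAt
  have hconc : ConcaveOn ℝ (Icc a b) h := by
    apply concaveOn_of_hasDerivWithinAt2_nonpos (f' := fun x => N / 2 * ((b - x) - (x - a)) - g' x)
      (f'' := fun x => -N - g'' x) (convex_Icc a b)
    · exact fun x hx => ((hp' x).continuousAt.continuousWithinAt).sub (hcont x hx)
    · intro x hx
      rw [hint] at hx ⊢
      exact ((hp' x).hasDerivWithinAt).sub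
        ((hg' x (Ioo_subset_Icc_self hx)).mono Ioo_subset_Icc_self)
    · intro x hx
      rw [hint] at hx ⊢
      have h2 : HasDerivAt (fun x => N / 2 * ((b - x) - (x - a))) (-N) x := by
        have := (((hasDerivAt_const x b).sub (hasDerivAt_id x)).sub
          ((hasDerivAt_id x).sub_const a)).const_mul (N / 2)
        exact this.congr_deriv (by ring)
      exact (h2.hasDerivWithinAt).sub
        ((hg'' x (Ioo_subset_Icc_self hx)).mono Ioo_subset_Icc_self)
    · intro x hx
      rw [hint] at hx
      have := abs_le.1 (hbound x (Ioo_subset_Icc_self hx))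
      linarith [this.1]
  have hha : h a = 0 := by simp [hh, ha]
  have hhb : h b = 0 := by simp [hh, hb]
  have hupper : ∀ x ∈ Icc a b, g x ≤ N * (b - a) ^ 2 / 8 := by
    intro x hx
    obtain ⟨hax, hxb⟩ := hx
    -- x = t a + (1-t) b
    have hba : (0:ℝ) < b - a := by linarith
    set t : ℝ := (b - x) / (b - a) with ht
    have ht0 : 0 ≤ t := div_nonneg (by linarith) hba.le
    have ht1 : 0 ≤ 1 - t := by
      have : t ≤ 1 := (div_le_one hba).2 (by linarith)
      linarith
    have hx' : t * a + (1 - t) * b = x := by rw [ht]; field_simp; ring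
    have := hconc.2 (left_mem_Icc.2 hab.le) (right_mem_Icc.2 hab.le) ht0 ht1 (by ring)
    rw [smul_eq_mul, smul_eq_mul, smul_eq_mul, smul_eq_mul, hx', hha, hhb] at this
    have hh0 : 0 ≤ h x := by linarith
    have : g x ≤ N / 2 * ((x - a) * (b - x)) := by simp [hh] at hh0; linarith
    nlinarith [sq_nonneg (x - a - (b - x))]
  set K : ℝ := N * (b - a) ^ 2 / 8 with hK
  have hba' : (0:ℝ) < b - a := by linarith
  have hKpos : 0 < K := by rw [hK]; positivity
  have key : ∀ x ∈ Ioo a b,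
      ENNReal.ofReal (1 / Real.sqrt K) ≤ ENNReal.ofReal (1 / Real.sqrt (g x)) := by
    intro x hx
    apply ENNReal.ofReal_le_ofReal
    have hgx := hpos x hx
    have hle := hupper x (Ioo_subset_Icc_self hx)
    exact one_div_le_one_div_of_le (Real.sqrt_pos.2 hgx) (Real.sqrt_le_sqrt hle)
  calc ENNReal.ofReal (1 / Real.sqrt N)
      ≤ ENNReal.ofReal (1 / Real.sqrt K * (b - a)) := by
        apply ENNReal.ofReal_le_ofReal
        rw [div_mul_eq_mul_div, one_mul, div_le_div_iff₀ (Real.sqrt_pos.2 hN)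
          (Real.sqrt_pos.2 hKpos), one_mul]
        have h1 : Real.sqrt K ≤ Real.sqrt (N * (b - a) ^ 2) :=
          Real.sqrt_le_sqrt (by rw [hK]; nlinarith [sq_nonneg (b - a), hN.le])
        calc Real.sqrt K ≤ Real.sqrt (N * (b - a) ^ 2) := h1
          _ = Real.sqrt N * (b - a) := by
              rw [Real.sqrt_mul hN.le, Real.sqrt_sq (by linarith)]
          _ = (b - a) * Real.sqrt N := mul_comm _ _
    _ = ENNReal.ofReal (1 / Real.sqrt K) * volume (Ioo a b) := by
        rw [Real.volume_Ioo, ← ENNReal.ofReal_mul (by positivity)]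
    _ = ∫⁻ _ in Ioo a b, ENNReal.ofReal (1 / Real.sqrt K) := by
        rw [setLIntegral_const]
    _ ≤ ∫⁻ x in Ioo a b, ENNReal.ofReal (1 / Real.sqrt (g x)) :=
        setLIntegral_mono' measurableSet_Ioo key
    _ ≤ ∫⁻ x in Icc a b, ENNReal.ofReal (1 / Real.sqrt (g x)) :=
        lintegral_mono_set Ioo_subset_Icc_self
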